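/- arXiv:0802.0361 — 5 statements merged into one kernel-verified Lean document; each statement's English description precedes it below -/
import Mathlib

section
/- Let Γ be a perfect group and V an R[Γ]-module. Then for every q ≥ 0 the space of higher invariants H⁰_q(Γ,V) = {v ∈ V : I_Γ^{q+1} v = 0} equals the space of ordinary invariants V^Γ = {v ∈ V : I_Γ v = 0}. -/
open scoped commutatorElement

lemma aug_le_sq (R : Type*) [CommRing R] (Γ : Type*) [Group Γ]
    (hperf : commutator Γ = ⊤) :
    (Ideal.span (Set.range fun γ : Γ => MonoidAlgebra.of R Γ γ - 1) : Ideal (MonoidAlgebra R Γ)) ≤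
      Ideal.span (Set.range fun γ : Γ => MonoidAlgebra.of R Γ γ - 1) *
        Ideal.span (Set.range fun γ : Γ => MonoidAlgebra.of R Γ γ - 1) := by
  set J : Ideal (MonoidAlgebra R Γ) :=
    Ideal.span (Set.range fun γ : Γ => MonoidAlgebra.of R Γ γ - 1) with hJ
  have hmemJ : ∀ γ : Γ, MonoidAlgebra.of R Γ γ - 1 ∈ J := fun γ =>
    Ideal.subset_span ⟨γ, rfl⟩
  rw [hJ]
  apply Ideal.span_le.2
  rintro _ ⟨γ, rfl⟩
  have hγ : γ ∈ commutator Γ := hperf ▸ Subgroup.mem_top γ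
  rw [commutator_eq_closure] at hγ
  induction hγ using Subgroup.closure_induction with
  | mem g hg =>
    obtain ⟨a, b, rfl⟩ := hg
    show MonoidAlgebra.of R Γ ⁅a, b⁆ - 1 ∈ (J * J : Ideal (MonoidAlgebra R Γ))
    have key : MonoidAlgebra.of R Γ ⁅a, b⁆ - 1 =
        MonoidAlgebra.of R Γ (a * b) *
          ((MonoidAlgebra.of R Γ a⁻¹ - 1) * (MonoidAlgebra.of R Γ b⁻¹ - 1) -
           (MonoidAlgebra.of R Γ b⁻¹ - 1) * (MonoidAlgebra.of R Γ a⁻¹ - 1)) := by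
      have e : MonoidAlgebra.of R Γ ⁅a, b⁆
          = MonoidAlgebra.of R Γ a * MonoidAlgebra.of R Γ b *
            MonoidAlgebra.of R Γ a⁻¹ * MonoidAlgebra.of R Γ b⁻¹ := by
        simp [commutatorElement_def, map_mul]
      have ea : MonoidAlgebra.of R Γ a * MonoidAlgebra.of R Γ a⁻¹ = 1 := by
        rw [← map_mul, mul_inv_cancel, map_one]
      have eb : MonoidAlgebra.of R Γ b * MonoidAlgebra.of R Γ b⁻¹ = 1 := by
        rw [← map_mul, mul_inv_cancel, map_one]
      rw [e, map_mul]
      generalize MonoidAlgebra.of R Γ a = A at *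
      generalize MonoidAlgebra.of R Γ b = B at *
      generalize MonoidAlgebra.of R Γ a⁻¹ = A' at *
      generalize MonoidAlgebra.of R Γ b⁻¹ = B' at *
      have h1 : A * B * B' * A' = 1 := by
        rw [mul_assoc A B B', eb, mul_one, ea]
      have expand : A * B * ((A' - 1) * (B' - 1) - (B' - 1) * (A' - 1))
          = A * B * A' * B' - A * B * B' * A' := by noncomm_ring
      rw [expand, h1]
    rw [key]
    exact Ideal.mul_mem_left _ _ (Submodule.sub_mem _
      (Submodule.mul_mem_mul (hmemJ _) (hmemJ _))
      (Submodule.mul_mem_mul (hmemJ _) (hmemJ _)))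
  | one =>
    show MonoidAlgebra.of R Γ (1 : Γ) - 1 ∈ (J * J : Ideal (MonoidAlgebra R Γ))
    rw [map_one, sub_self]
    exact zero_mem _
  | mul a b _ _ ha hb =>
    show MonoidAlgebra.of R Γ (a * b) - 1 ∈ (J * J : Ideal (MonoidAlgebra R Γ))
    have key : MonoidAlgebra.of R Γ (a * b) - 1 =
        (MonoidAlgebra.of R Γ a - 1) * (MonoidAlgebra.of R Γ b - 1) +
          ((MonoidAlgebra.of R Γ a - 1) + (MonoidAlgebra.of R Γ b - 1)) := by
      rw [map_mul]
      noncomm_ring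
    rw [key]
    exact Submodule.add_mem _ (Ideal.mul_mem_left _ _ hb) (Submodule.add_mem _ ha hb)
  | inv a _ ha =>
    show MonoidAlgebra.of R Γ a⁻¹ - 1 ∈ (J * J : Ideal (MonoidAlgebra R Γ))
    have key : MonoidAlgebra.of R Γ a⁻¹ - 1 =
        -(MonoidAlgebra.of R Γ a⁻¹ * (MonoidAlgebra.of R Γ a - 1)) := by
      have h : MonoidAlgebra.of R Γ a⁻¹ * MonoidAlgebra.of R Γ a = 1 := by
        rw [← map_mul, inv_mul_cancel, map_one]
      rw [mul_sub, h, mul_one, neg_sub]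
    rw [key]
    exact Submodule.neg_mem _ (Ideal.mul_mem_left _ _ ha)

/-- For a perfect group `Γ` and an `R[Γ]`-module `V`, the higher invariants
`H⁰_q(Γ,V) = {v : I_Γ^(q+1) v = 0}` coincide with the ordinary invariants
`V^Γ = {v : I_Γ v = 0}` for every `q ≥ 0`. -/
theorem higher_invariants_eq_invariants_of_perfect (R : Type*) [CommRing R]
    (Γ : Type*) [Group Γ] (hperf : commutator Γ = ⊤)
    (V : Type*) [AddCommGroup V] [Module (MonoidAlgebra R Γ) V]
    (I : Ideal (MonoidAlgebra R Γ))
    (hI : I = Ideal.span (Set.range fun γ : Γ => MonoidAlgebra.of R Γ γ - 1))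
    (q : ℕ) :
    {v : V | ∀ x ∈ I ^ (q + 1), x • v = 0} = {v : V | ∀ x ∈ I, x • v = 0} := by
  have hsq : I ≤ I * I := hI ▸ aug_le_sq R Γ hperf
  have hle : ∀ n : ℕ, I ≤ I ^ (n + 1) := by
    intro n
    induction n with
    | zero => rw [Submodule.pow_one]
    | succ n ih =>
      calc I ≤ I * I := hsq
        _ ≤ I ^ (n + 1) * I := mul_le_mul_left ih I
        _ = I ^ (n + 2) := (Submodule.pow_succ (M := I)).symm
  have hge : ∀ n : ℕ, I ^ (n + 1) ≤ I := by
    intro n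
    induction n with
    | zero => rw [Submodule.pow_one]
    | succ n _ =>
      rw [Submodule.pow_succ (M := I)]
      exact Submodule.mul_le.2 fun x _ y hy => Ideal.mul_mem_left _ _ hy
  ext v
  simp only [Set.mem_setOf_eq]
  exact ⟨fun h x hx => h x (hle q hx), fun h x hx => h x (hge q hx)⟩
end

section
/- Let Γ be a compact topological group acting on a complex Hilbert space V by a continuous unitary (or merely continuous) representation. Then H⁰_q(Γ,V) = H⁰(Γ,V) for every q ≥ 0; that is, there are no higher invariants other than the classical invariants. -/
/-- The higher invariants `H⁰_q(Γ,V)` of a representation `ρ`: those `v` killed by every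
product `(γ₀-1)⋯(γ_q-1)` of `q+1` augmentation generators (equivalently, `I_Γ^(q+1) v = 0`). -/
def higherInvariants {Γ V : Type*} [Group Γ] [AddCommGroup V] [Module ℂ V]
    (ρ : Γ →* (V →ₗ[ℂ] V)) (q : ℕ) : Set V :=
  {v | ∀ l : List Γ, l.length = q + 1 → l.foldr (fun γ w => ρ γ w - w) v = 0}

/-- An invariant vector is killed by any nonempty product of augmentation generators. -/
lemma invariant_foldr {Γ V : Type*} [Group Γ] [AddCommGroup V] [Module ℂ V]
    (ρ : Γ →* (V →ₗ[ℂ] V)) (v : V) (hv : ∀ γ : Γ, ρ γ v = v) :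
    ∀ l : List Γ, l ≠ [] → l.foldr (fun γ w => ρ γ w - w) v = 0 := by
  intro l
  induction l with
  | nil => intro h; exact absurd rfl h
  | cons γ t iht =>
    intro _
    by_cases ht : t = []
    · subst ht; simp [hv γ]
    · simp [List.foldr_cons, iht ht]

/-- For a compact group `Γ` acting continuously on a complex Hilbert space `V`,
there are no higher invariants beyond the classical ones: `H⁰_q(Γ,V) = H⁰(Γ,V) = V^Γ`
for every `q ≥ 0`. -/
theorem higher_invariants_eq_of_compact (Γ : Type*) [Group Γ] [TopologicalSpace Γ]
    [IsTopologicalGroup Γ] [CompactSpace Γ]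
    (V : Type*) [NormedAddCommGroup V] [InnerProductSpace ℂ V] [CompleteSpace V]
    (ρ : Γ →* (V →ₗ[ℂ] V))
    (hcont : Continuous fun p : Γ × V => ρ p.1 p.2) (q : ℕ) :
    higherInvariants ρ q = {v : V | ∀ γ : Γ, ρ γ v = v} := by
  induction q with
  | zero =>
    ext v
    constructor
    · intro hv γ
      have h := hv [γ] rfl
      simp only [List.foldr_cons, List.foldr_nil] at h
      exact sub_eq_zero.mp h
    · intro hv l hl
      exact invariant_foldr ρ v hv l (by rintro rfl; simp at hl)
  | succ q ih =>
    ext v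
    constructor
    · intro hv
      -- each (ρ γ v - v) lies in H_q, hence is invariant by IH
      have hw : ∀ γ δ : Γ, ρ δ (ρ γ v - v) = ρ γ v - v := by
        intro γ
        have hmem : (ρ γ v - v) ∈ higherInvariants ρ q := by
          intro l hl
          have h := hv (l ++ [γ]) (by simp [hl])
          simpa [List.foldr_append] using h
        rw [ih] at hmem
        exact hmem
      intro γ
      -- ρ (γ^n) v - v = n • (ρ γ v - v)
      have hpow : ∀ n : ℕ, ρ (γ ^ n) v - v = n • (ρ γ v - v) := by
        intro n
        induction n with
        | zero => simp
        | succ n ihn =>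
          have h1 : ρ (γ ^ (n + 1)) v = ρ (γ ^ n) (ρ γ v) := by
            rw [pow_succ, map_mul]; rfl
          have h2 : ρ (γ ^ n) (ρ γ v) = ρ (γ ^ n) v + (ρ γ v - v) := by
            have := hw γ (γ ^ n)
            rw [map_sub] at this
            have : ρ (γ ^ n) (ρ γ v) = ρ (γ ^ n) v + (ρ γ v - v) := by
              rw [← this]; abel
            exact this
          rw [h1, h2, succ_nsmul]
          rw [show ρ (γ ^ n) v + (ρ γ v - v) - v = (ρ (γ ^ n) v - v) + (ρ γ v - v) by abel,
            ihn]
      -- boundedness of the orbit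
      have horb : Continuous fun γ : Γ => ρ γ v :=
        hcont.comp (continuous_id.prodMk continuous_const)
      obtain ⟨C, hC⟩ := (isBounded_iff_forall_norm_le).mp (isCompact_range horb).isBounded
      by_contra hne
      have hx : 0 < ‖ρ γ v - v‖ := by
        rw [norm_pos_iff, sub_ne_zero]; exact hne
      obtain ⟨n, hn⟩ := exists_nat_gt ((C + ‖v‖) / ‖ρ γ v - v‖)
      have hlt : C + ‖v‖ < n * ‖ρ γ v - v‖ := by
        rwa [div_lt_iff₀ hx] at hn
      have hle : ‖ρ (γ ^ n) v - v‖ ≤ C + ‖v‖ := by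
        calc ‖ρ (γ ^ n) v - v‖ ≤ ‖ρ (γ ^ n) v‖ + ‖v‖ := norm_sub_le _ _
        _ ≤ C + ‖v‖ := by
            have := hC (ρ (γ ^ n) v) ⟨γ ^ n, rfl⟩
            linarith
      have heq : ‖ρ (γ ^ n) v - v‖ = n * ‖ρ γ v - v‖ := by
        rw [hpow n, ← Nat.cast_smul_eq_nsmul ℝ, norm_smul, Real.norm_natCast]
      rw [heq] at hle
      linarith
    · intro hv l hl
      exact invariant_foldr ρ v hv l (by rintro rfl; simp at hl)
end

section
/- Let (G,Γ) be a Hecke pair, V a C[G]-module, g ∈ G, and write ΓgΓ = ⊔_{j=1}^n g_jΓ as a disjoint union of left cosets. If v ∈ H⁰_q(Γ,V), then Σ_{j=1}^n g_j v lies in H⁰_q(Γ(g), V), where Γ(g) is the kernel of the Γ-action on ΓgΓ/Γ. -/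
/-- Higher invariants `H⁰_q(Σ,V) = {v : I_Σ^(q+1) v = 0}` for a subgroup `Σ ≤ G` acting on a
`ℂ[G]`-module `V`: the elements killed by every product of `q+1` generators `(σ-1)`, `σ ∈ Σ`. -/
def heckeHigherInvariants {G : Type*} [Group G] (S : Subgroup G)
    (V : Type*) [AddCommGroup V] [Module (MonoidAlgebra ℂ G) V] (q : ℕ) : Set V :=
  {v | ∀ l : List G, (∀ x ∈ l, x ∈ S) → l.length = q + 1 →
    l.foldr (fun γ w => MonoidAlgebra.of ℂ G γ • w - w) v = 0}

/-- If `ΓgΓ = ⊔_{j=1}^n g_jΓ` and `v ∈ H⁰_q(Γ,V)`, then `Σ_j g_j v` lies in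
`H⁰_q(Γ(g),V)`, where `Γ(g)` is the kernel of the `Γ`-action on `ΓgΓ/Γ`. -/
theorem hecke_sum_mem_higher_invariants (G : Type*) [Group G] (Γ : Subgroup G)
    (hecke : ∀ g : G,
      ((QuotientGroup.mk '' {x : G | ∃ a ∈ Γ, ∃ b ∈ Γ, x = a * g * b} : Set (G ⧸ Γ))).Finite)
    (V : Type*) [AddCommGroup V] [Module (MonoidAlgebra ℂ G) V]
    (g : G) (n : ℕ) (gj : Fin n → G)
    (hcover : {x : G | ∃ a ∈ Γ, ∃ b ∈ Γ, x = a * g * b} =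
      ⋃ j : Fin n, {y : G | ∃ c ∈ Γ, y = gj j * c})
    (hdisj : ∀ i j : Fin n, i ≠ j →
      Disjoint {y : G | ∃ c ∈ Γ, y = gj i * c} {y : G | ∃ c ∈ Γ, y = gj j * c})
    (K : Subgroup G)
    (hK : ∀ x : G, x ∈ K ↔ x ∈ Γ ∧ ∀ h ∈ {x : G | ∃ a ∈ Γ, ∃ b ∈ Γ, x = a * g * b},
      (QuotientGroup.mk (x * h) : G ⧸ Γ) = QuotientGroup.mk h)
    (q : ℕ) (v : V) (hv : v ∈ heckeHigherInvariants Γ V q) :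
    (∑ j : Fin n, MonoidAlgebra.of ℂ G (gj j) • v) ∈ heckeHigherInvariants K V q := by

  intro l hl hlen
  -- Each single term `gj j • v` is killed: conjugation sends the list into Γ.
  have key : ∀ (l : List G), (∀ x ∈ l, x ∈ K) → ∀ j : Fin n,
      ∃ l' : List G, (∀ x ∈ l', x ∈ Γ) ∧ l'.length = l.length ∧
      l.foldr (fun γ w => MonoidAlgebra.of ℂ G γ • w - w) (MonoidAlgebra.of ℂ G (gj j) • v)
        = MonoidAlgebra.of ℂ G (gj j) •
            l'.foldr (fun γ w => MonoidAlgebra.of ℂ G γ • w - w) v := by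
    intro l hl j
    induction l with
    | nil => exact ⟨[], by simp, rfl, rfl⟩
    | cons a t ih =>
      obtain ⟨l', hl', hlen', heq⟩ := ih (fun x hx => hl x (List.mem_cons_of_mem _ hx))
      have haK := hl a (List.mem_cons_self)
      have hgj : gj j ∈ {x : G | ∃ a ∈ Γ, ∃ b ∈ Γ, x = a * g * b} := by
        rw [hcover]
        exact Set.mem_iUnion.mpr ⟨j, 1, one_mem Γ, (mul_one _).symm⟩
      have hη : (gj j)⁻¹ * (a * gj j) ∈ Γ := by
        have h1 := ((hK a).mp haK).2 (gj j) hgj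
        exact (QuotientGroup.eq).mp h1.symm
      refine ⟨(gj j)⁻¹ * (a * gj j) :: l', ?_, by simp [hlen'], ?_⟩
      · intro x hx
        rcases List.mem_cons.mp hx with h | h
        · exact h ▸ hη
        · exact hl' x h
      · simp only [List.foldr_cons, heq]
        rw [smul_sub]
        congr 1
        rw [smul_smul, smul_smul, ← map_mul, ← map_mul]
        congr 2
        group
  -- The fold is additive, hence distributes over the finite sum.
  have addv : ∀ (l : List G) (f : Fin n → V),
      l.foldr (fun γ w => MonoidAlgebra.of ℂ G γ • w - w) (∑ j : Fin n, f j)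
        = ∑ j : Fin n, l.foldr (fun γ w => MonoidAlgebra.of ℂ G γ • w - w) (f j) := by
    intro l f
    induction l with
    | nil => rfl
    | cons a t ih =>
      simp only [List.foldr_cons, ih, Finset.smul_sum]
      exact (Finset.sum_sub_distrib _ _).symm
  rw [addv]
  refine Finset.sum_eq_zero fun j _ => ?_
  obtain ⟨l', hl', hlen', heq⟩ := key l hl j
  rw [heq, hv l' hl' (hlen'.trans hlen), smul_zero]
end

section
/- Let (G,Γ) be a Hecke pair, V a C[G]-module, g ∈ G, ΓgΓ = ⊔_{j=1}^n g_jΓ, and γ_1,...,γ_n ∈ Γ. If v ∈ H⁰_q(Γ,V) with q ≥ 1, then Σ_{j=1}^n g_j(γ_j - 1)v lies in H⁰_{q-1}(Γ(g), V). -/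
lemma hecke_foldr_sum {G : Type*} [Group G] {V : Type*} [AddCommGroup V]
    [Module (MonoidAlgebra ℂ G) V] {n : ℕ} (l : List G) (f : Fin n → V) :
    l.foldr (fun γ w => MonoidAlgebra.of ℂ G γ • w - w) (∑ j : Fin n, f j)
      = ∑ j : Fin n, l.foldr (fun γ w => MonoidAlgebra.of ℂ G γ • w - w) (f j) := by
  induction l with
  | nil => simp
  | cons a t ih =>
    simp only [List.foldr_cons, ih, Finset.smul_sum, Finset.sum_sub_distrib]

lemma hecke_foldr_shift {G : Type*} [Group G] {V : Type*} [AddCommGroup V]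
    [Module (MonoidAlgebra ℂ G) V] (Γ K : Subgroup G) (g : G)
    (hg : ∀ κ ∈ K, ∃ c ∈ Γ, κ * g = g * c) :
    ∀ l : List G, (∀ x ∈ l, x ∈ K) → ∃ l' : List G, (∀ x ∈ l', x ∈ Γ) ∧
      l'.length = l.length ∧ ∀ u : V,
      l.foldr (fun γ w => MonoidAlgebra.of ℂ G γ • w - w) (MonoidAlgebra.of ℂ G g • u)
        = MonoidAlgebra.of ℂ G g • l'.foldr (fun γ w => MonoidAlgebra.of ℂ G γ • w - w) u := by
  intro l
  induction l with
  | nil => exact fun _ => ⟨[], by simp, rfl, fun u => by simp⟩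
  | cons κ t ih =>
    intro hl
    obtain ⟨l', hl', hlen, heq⟩ := ih (fun x hx => hl x (List.mem_cons_of_mem _ hx))
    obtain ⟨c, hc, hcg⟩ := hg κ (hl κ List.mem_cons_self)
    refine ⟨c :: l', ?_, by simp [hlen], fun u => ?_⟩
    · intro x hx
      rcases List.mem_cons.mp hx with h | h
      · exact h ▸ hc
      · exact hl' x h
    · simp only [List.foldr_cons, heq, smul_sub]
      congr 1
      rw [smul_smul, smul_smul, ← map_mul, ← map_mul, hcg]

/-- If `ΓgΓ = ⊔_{j=1}^n g_jΓ`, `γ_1,…,γ_n ∈ Γ` and `v ∈ H⁰_q(Γ,V)` with `q ≥ 1`,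
then `Σ_j g_j(γ_j - 1)v ∈ H⁰_{q-1}(Γ(g),V)`. -/
theorem hecke_difference_mem_lower_invariants (G : Type*) [Group G] (Γ : Subgroup G)
    (hecke : ∀ g : G,
      ((QuotientGroup.mk '' {x : G | ∃ a ∈ Γ, ∃ b ∈ Γ, x = a * g * b} : Set (G ⧸ Γ))).Finite)
    (V : Type*) [AddCommGroup V] [Module (MonoidAlgebra ℂ G) V]
    (g : G) (n : ℕ) (gj : Fin n → G)
    (hcover : {x : G | ∃ a ∈ Γ, ∃ b ∈ Γ, x = a * g * b} =
      ⋃ j : Fin n, {y : G | ∃ c ∈ Γ, y = gj j * c})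
    (hdisj : ∀ i j : Fin n, i ≠ j →
      Disjoint {y : G | ∃ c ∈ Γ, y = gj i * c} {y : G | ∃ c ∈ Γ, y = gj j * c})
    (γ : Fin n → G) (hγ : ∀ j, γ j ∈ Γ)
    (K : Subgroup G)
    (hK : ∀ x : G, x ∈ K ↔ x ∈ Γ ∧ ∀ h ∈ {x : G | ∃ a ∈ Γ, ∃ b ∈ Γ, x = a * g * b},
      (QuotientGroup.mk (x * h) : G ⧸ Γ) = QuotientGroup.mk h)
    (q : ℕ) (hq : 1 ≤ q) (v : V) (hv : v ∈ heckeHigherInvariants Γ V q) :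
    (∑ j : Fin n, MonoidAlgebra.of ℂ G (gj j) • (MonoidAlgebra.of ℂ G (γ j) • v - v)) ∈
      heckeHigherInvariants K V (q - 1) := by
  intro l hl hlen
  -- each gj j is in the double coset
  have hmem : ∀ j : Fin n, gj j ∈ {x : G | ∃ a ∈ Γ, ∃ b ∈ Γ, x = a * g * b} := by
    intro j
    rw [hcover]
    exact Set.mem_iUnion.mpr ⟨j, ⟨1, Subgroup.one_mem Γ, by simp⟩⟩
  -- κ ∈ K moves each gj j by a right Γ-element
  have hg : ∀ j : Fin n, ∀ κ ∈ K, ∃ c ∈ Γ, κ * gj j = gj j * c := by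
    intro j κ hκ
    have h := ((hK κ).mp hκ).2 (gj j) (hmem j)
    have h' : (κ * gj j)⁻¹ * gj j ∈ Γ := QuotientGroup.eq.mp h
    refine ⟨(gj j)⁻¹ * κ * gj j, ?_, by group⟩
    have : (gj j)⁻¹ * κ * gj j = ((κ * gj j)⁻¹ * gj j)⁻¹ := by group
    rw [this]
    exact Subgroup.inv_mem Γ h'
  rw [hecke_foldr_sum]
  refine Finset.sum_eq_zero fun j _ => ?_
  obtain ⟨l', hl', hlen', heq⟩ := hecke_foldr_shift (V := V) Γ K (gj j) (hg j) l hl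
  rw [heq]
  have : (l' ++ [γ j]).foldr (fun γ w => MonoidAlgebra.of ℂ G γ • w - w) v
      = l'.foldr (fun γ w => MonoidAlgebra.of ℂ G γ • w - w)
        (MonoidAlgebra.of ℂ G (γ j) • v - v) := by
    rw [List.foldr_append]
    simp
  have hz := hv (l' ++ [γ j]) ?_ ?_
  · rw [this] at hz
    rw [hz, smul_zero]
  · intro x hx
    rcases List.mem_append.mp hx with h | h
    · exact hl' x h
    · simp at h; exact h ▸ hγ j
  · simp [hlen', hlen]
    omega
end

section
/- Let G = ℚ_p ⋊ ℚ_p^× (with multiplication (x,y)(x',y') = (x + y x', y y')), Γ = ℤ_p ⋊ ℤ_p^×, and g = (0,p). Then |ΓgΓ/Γ| = p while |Γ\ΓgΓ| = 1; in particular the Hecke pair (G,Γ) is not unimodular. -/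
open SemidirectProduct

/-- The scaling action of `ℚ_p^×` on the additive group `ℚ_p`, as a homomorphism into the
automorphisms of `Multiplicative ℚ_p`. -/
noncomputable def padicScalingAut (p : ℕ) [Fact p.Prime] :
    ℚ_[p]ˣ →* MulAut (Multiplicative ℚ_[p]) where
  toFun y := AddEquiv.toMultiplicative ((DistribMulAction.toAddAut ℚ_[p]ˣ ℚ_[p]) y)
  map_one' := by
    ext x; exact congrArg Multiplicative.ofAdd (one_smul ℚ_[p]ˣ x.toAdd)
  map_mul' y z := by
    ext x; exact congrArg Multiplicative.ofAdd (mul_smul y z x.toAdd)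

/-- The semidirect product `G = ℚ_p ⋊ ℚ_p^×`, with `(x,y)(x',y') = (x + y x', y y')`. -/
noncomputable abbrev PadicAffineGroup (p : ℕ) [Fact p.Prime] :=
  SemidirectProduct (Multiplicative ℚ_[p]) ℚ_[p]ˣ (padicScalingAut p)

/-- The compact open subgroup `Γ = ℤ_p ⋊ ℤ_p^×` of `ℚ_p ⋊ ℚ_p^×`. -/
noncomputable def padicAffineGamma (p : ℕ) [Fact p.Prime] : Subgroup (PadicAffineGroup p) where
  carrier := {g | ‖g.left.toAdd‖ ≤ 1 ∧ ‖(g.right : ℚ_[p])‖ = 1}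
  one_mem' := by
    constructor
    · show ‖(Multiplicative.toAdd (1 : Multiplicative ℚ_[p]))‖ ≤ 1
      simp
    · show ‖((1 : ℚ_[p]ˣ) : ℚ_[p])‖ = 1
      simp
  mul_mem' := by
    rintro a b ⟨ha1, ha2⟩ ⟨hb1, hb2⟩
    constructor
    · show ‖(Multiplicative.toAdd ((a * b).left))‖ ≤ 1
      have : (a * b).left = a.left * (padicScalingAut p a.right) b.left := rfl
      rw [this]
      have h2 : (Multiplicative.toAdd (a.left * (padicScalingAut p a.right) b.left))
          = a.left.toAdd + (a.right : ℚ_[p]) * b.left.toAdd := rfl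
      rw [h2]
      refine le_trans (Padic.nonarchimedean _ _) (max_le ha1 ?_)
      rw [norm_mul, ha2, one_mul]; exact hb1
    · show ‖(((a * b).right : ℚ_[p]ˣ) : ℚ_[p])‖ = 1
      have : (a * b).right = a.right * b.right := rfl
      rw [this, Units.val_mul, norm_mul, ha2, hb2, one_mul]
  inv_mem' := by
    rintro a ⟨ha1, ha2⟩
    have hinv : ‖((a.right⁻¹ : ℚ_[p]ˣ) : ℚ_[p])‖ = 1 := by
      have := norm_mul ((a.right : ℚ_[p]ˣ) : ℚ_[p]) ((a.right⁻¹ : ℚ_[p]ˣ) : ℚ_[p])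
      rw [← Units.val_mul, mul_inv_cancel] at this
      simp only [Units.val_one, norm_one] at this
      rw [ha2, one_mul] at this
      exact this.symm
    constructor
    · show ‖(Multiplicative.toAdd (a⁻¹).left)‖ ≤ 1
      have h2 : (Multiplicative.toAdd (a⁻¹).left)
          = ((a.right⁻¹ : ℚ_[p]ˣ) : ℚ_[p]) * (-(a.left.toAdd)) := rfl
      rw [h2, norm_mul, hinv, one_mul, norm_neg]
      exact ha1
    · show ‖(((a⁻¹).right : ℚ_[p]ˣ) : ℚ_[p])‖ = 1
      exact hinv

variable {p : ℕ} [hp : Fact p.Prime]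

private lemma PAG.mul_eq (a b : PadicAffineGroup p) :
    a * b = ⟨Multiplicative.ofAdd (a.left.toAdd + (a.right : ℚ_[p]) * b.left.toAdd),
      a.right * b.right⟩ := rfl

private lemma PAG.inv_eq (a : PadicAffineGroup p) :
    a⁻¹ = ⟨Multiplicative.ofAdd (((a.right⁻¹ : ℚ_[p]ˣ) : ℚ_[p]) * (-(a.left.toAdd))),
      a.right⁻¹⟩ := rfl

private lemma PAG.mk_left_toAdd (x : ℚ_[p]) (u : ℚ_[p]ˣ) :
    ((⟨Multiplicative.ofAdd x, u⟩ : PadicAffineGroup p)).left.toAdd = x := rfl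

private lemma PAG.mk_right (x : ℚ_[p]) (u : ℚ_[p]ˣ) :
    ((⟨Multiplicative.ofAdd x, u⟩ : PadicAffineGroup p)).right = u := rfl

private lemma PAG.mem_gamma {x : PadicAffineGroup p} :
    x ∈ padicAffineGamma p ↔ ‖x.left.toAdd‖ ≤ 1 ∧ ‖((x.right : ℚ_[p]ˣ) : ℚ_[p])‖ = 1 :=
  Iff.rfl

/-- `‖x‖ < 1 → ‖x‖ ≤ p⁻¹` for `x` with `‖x‖ ≤ 1`. -/
private lemma PAG.norm_le_inv_of_lt_one {x : ℚ_[p]} (h1 : ‖x‖ ≤ 1) (h2 : ‖x‖ < 1) :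
    ‖x‖ ≤ (p : ℝ)⁻¹ := by
  set z : ℤ_[p] := ⟨x, h1⟩ with hzdef
  have hz : ‖z‖ ≤ (p : ℝ) ^ (-1 : ℤ) := by
    rw [PadicInt.norm_le_pow_iff_norm_lt_pow_add_one]
    show ‖x‖ < (p : ℝ) ^ ((-1 : ℤ) + 1)
    simpa using h2
  rw [PadicInt.norm_def] at hz
  have hz' : ‖z‖ ≤ (p : ℝ)⁻¹ := by simpa [zpow_neg, zpow_one] using hz
  exact hz'

private lemma PAG.exists_repr {c : ℚ_[p]} (h : ‖c‖ ≤ 1) :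
    ∃ j : ℕ, j < p ∧ ‖c - (j : ℚ_[p])‖ ≤ (p : ℝ)⁻¹ := by
  set z : ℤ_[p] := ⟨c, h⟩ with hzdef
  refine ⟨z.zmodRepr, z.zmodRepr_lt_p, ?_⟩
  have hcoe : ((z - (z.zmodRepr : ℤ_[p]) : ℤ_[p]) : ℚ_[p]) = c - (z.zmodRepr : ℚ_[p]) := by
    push_cast; rfl
  have hm := PadicInt.sub_zmodRepr_mem z
  rw [IsLocalRing.mem_maximalIdeal, PadicInt.mem_nonunits, PadicInt.norm_def, hcoe] at hm
  have h1 : ‖c - (z.zmodRepr : ℚ_[p])‖ ≤ 1 := by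
    have := PadicInt.norm_le_one (z - (z.zmodRepr : ℤ_[p]))
    rwa [PadicInt.norm_def, hcoe] at this
  exact PAG.norm_le_inv_of_lt_one h1 hm

/-- For `G = ℚ_p ⋊ ℚ_p^×`, `Γ = ℤ_p ⋊ ℤ_p^×` and `g = (0,p)`, the double coset
`ΓgΓ` decomposes into `p` left `Γ`-cosets but a single right `Γ`-coset; in particular the
Hecke pair `(G,Γ)` is not unimodular. -/
theorem padic_hecke_pair_not_unimodular (p : ℕ) [hp : Fact p.Prime]
    (g : PadicAffineGroup p)
    (hg : g = ⟨Multiplicative.ofAdd (0 : ℚ_[p]),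
      Units.mk0 (p : ℚ_[p]) (by exact_mod_cast hp.out.ne_zero)⟩) :
    Nat.card (QuotientGroup.mk ''
        {x : PadicAffineGroup p | ∃ a ∈ padicAffineGamma p, ∃ b ∈ padicAffineGamma p,
          x = a * g * b} : Set (PadicAffineGroup p ⧸ padicAffineGamma p)) = p ∧
      Nat.card (Quotient.mk (QuotientGroup.rightRel (padicAffineGamma p)) ''
        {x : PadicAffineGroup p | ∃ a ∈ padicAffineGamma p, ∃ b ∈ padicAffineGamma p,
          x = a * g * b}) = 1 := by
  have hp0 : (0:ℝ) < p := by exact_mod_cast hp.out.pos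
  have hgl : g.left.toAdd = (0 : ℚ_[p]) := by rw [hg]; rfl
  have hgr : ((g.right : ℚ_[p]ˣ) : ℚ_[p]) = (p : ℚ_[p]) := by rw [hg]; rfl
  have hgrn : ‖((g.right : ℚ_[p]ˣ) : ℚ_[p])‖ = (p : ℝ)⁻¹ := by
    rw [hgr]; exact Padic.norm_p
  have hgrinv : ‖((g.right⁻¹ : ℚ_[p]ˣ) : ℚ_[p])‖ = (p : ℝ) := by
    rw [Units.val_inv_eq_inv_val, norm_inv, hgrn, inv_inv]
  have hpinvle : (p : ℝ)⁻¹ ≤ 1 := by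
    rw [inv_le_one_iff₀]; right; exact_mod_cast hp.out.one_le
  -- characterization of the double coset
  have hD : ∀ x : PadicAffineGroup p,
      (∃ a ∈ padicAffineGamma p, ∃ b ∈ padicAffineGamma p, x = a * g * b) ↔
      (‖x.left.toAdd‖ ≤ 1 ∧ ‖((x.right : ℚ_[p]ˣ) : ℚ_[p])‖ = (p : ℝ)⁻¹) := by
    intro x
    constructor
    · rintro ⟨a, ⟨ha1, ha2⟩, b, ⟨hb1, hb2⟩, rfl⟩
      simp only [PAG.mul_eq, PAG.mk_left_toAdd, PAG.mk_right, hgl, mul_zero, add_zero]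
      constructor
      · refine le_trans (Padic.nonarchimedean _ _) (max_le ha1 ?_)
        rw [norm_mul, Units.val_mul, norm_mul, ha2, hgrn, one_mul]
        calc (p:ℝ)⁻¹ * ‖b.left.toAdd‖ ≤ (p:ℝ)⁻¹ * 1 := by
              exact mul_le_mul_of_nonneg_left hb1 (by positivity)
          _ ≤ 1 := by rw [mul_one]; exact hpinvle
      · rw [Units.val_mul, Units.val_mul, norm_mul, norm_mul, ha2, hgrn, hb2, one_mul, mul_one]
    · rintro ⟨h1, h2⟩
      have hx2 : ‖((g.right⁻¹ * x.right : ℚ_[p]ˣ) : ℚ_[p])‖ = 1 := by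
        rw [Units.val_mul, norm_mul, hgrinv, h2, mul_inv_cancel₀ hp0.ne']
      refine ⟨⟨Multiplicative.ofAdd x.left.toAdd, 1⟩, ⟨?_, ?_⟩,
        ⟨Multiplicative.ofAdd 0, g.right⁻¹ * x.right⟩, ⟨?_, ?_⟩, ?_⟩
      · simpa [PAG.mk_left_toAdd] using h1
      · simp [PAG.mk_right]
      · simp [PAG.mk_left_toAdd]
      · simpa [PAG.mk_right] using hx2
      · apply SemidirectProduct.ext
        · simp only [PAG.mul_eq, PAG.mk_left_toAdd, PAG.mk_right, toAdd_ofAdd, hgl, Units.val_one,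
            one_mul, mul_zero, add_zero]
          exact (ofAdd_toAdd x.left).symm
        · simp only [PAG.mul_eq, PAG.mk_right]
          group
  constructor
  · -- left cosets: exactly p of them
    classical
    let f : ZMod p → PadicAffineGroup p ⧸ padicAffineGamma p :=
      fun j => QuotientGroup.mk (⟨Multiplicative.ofAdd ((j.val : ℚ_[p])), g.right⟩ :
        PadicAffineGroup p)
    have hinj : Function.Injective f := by
      intro i j hij
      rw [QuotientGroup.eq] at hij
      obtain ⟨hn, -⟩ := PAG.mem_gamma.mp hij
      simp only [PAG.inv_eq, PAG.mul_eq, PAG.mk_left_toAdd, PAG.mk_right, toAdd_ofAdd] at hn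
      have hfac : ((g.right⁻¹ : ℚ_[p]ˣ) : ℚ_[p]) * (-((i.val : ℚ_[p]))) +
          ((g.right⁻¹ : ℚ_[p]ˣ) : ℚ_[p]) * ((j.val : ℚ_[p])) =
          ((g.right⁻¹ : ℚ_[p]ˣ) : ℚ_[p]) * ((j.val : ℚ_[p]) - (i.val : ℚ_[p])) := by ring
      rw [hfac, norm_mul, hgrinv] at hn
      have hle : ‖((j.val : ℚ_[p]) - (i.val : ℚ_[p]))‖ ≤ (p:ℝ)⁻¹ := by
        rwa [← le_div_iff₀' hp0, one_div] at hn
      have hdvd : (p:ℤ) ∣ ((j.val : ℤ) - (i.val : ℤ)) := by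
        have := (Padic.norm_int_le_pow_iff_dvd ((j.val : ℤ) - (i.val : ℤ)) 1).mp
          (by push_cast; simpa [zpow_neg, zpow_one] using hle)
        simpa using this
      have hz : (((j.val : ℤ) - (i.val : ℤ) : ℤ) : ZMod p) = 0 :=
        (ZMod.intCast_zmod_eq_zero_iff_dvd _ p).mpr hdvd
      push_cast at hz
      rw [sub_eq_zero] at hz
      simpa [ZMod.natCast_val, ZMod.cast_id] using hz.symm
    have himg : (QuotientGroup.mk ''
        {x : PadicAffineGroup p | ∃ a ∈ padicAffineGamma p, ∃ b ∈ padicAffineGamma p,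
          x = a * g * b} : Set (PadicAffineGroup p ⧸ padicAffineGamma p)) = Set.range f := by
      ext q
      constructor
      · rintro ⟨x, hx, rfl⟩
        obtain ⟨h1, h2⟩ := (hD x).mp hx
        obtain ⟨j, hjp, hj⟩ := PAG.exists_repr h1
        refine ⟨(j : ZMod p), ?_⟩
        have hval : ((j : ZMod p)).val = j := ZMod.val_natCast_of_lt hjp
        show QuotientGroup.mk _ = QuotientGroup.mk x
        rw [QuotientGroup.eq]
        refine PAG.mem_gamma.mpr ⟨?_, ?_⟩
        · simp only [PAG.inv_eq, PAG.mul_eq, PAG.mk_left_toAdd, PAG.mk_right, toAdd_ofAdd, hval]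
          have hfac : ((g.right⁻¹ : ℚ_[p]ˣ) : ℚ_[p]) * (-((j : ℚ_[p]))) +
              ((g.right⁻¹ : ℚ_[p]ˣ) : ℚ_[p]) * x.left.toAdd =
              ((g.right⁻¹ : ℚ_[p]ˣ) : ℚ_[p]) * (x.left.toAdd - (j : ℚ_[p])) := by ring
          rw [hfac, norm_mul, hgrinv]
          calc (p:ℝ) * ‖x.left.toAdd - (j : ℚ_[p])‖ ≤ (p:ℝ) * (p:ℝ)⁻¹ :=
                mul_le_mul_of_nonneg_left hj hp0.le
            _ = 1 := mul_inv_cancel₀ hp0.ne'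
        · simp only [PAG.inv_eq, PAG.mul_eq, PAG.mk_right]
          rw [Units.val_mul, norm_mul, hgrinv, h2, mul_inv_cancel₀ hp0.ne']
      · rintro ⟨j, rfl⟩
        refine ⟨⟨Multiplicative.ofAdd ((j.val : ℚ_[p])), g.right⟩, (hD _).mpr ⟨?_, ?_⟩, rfl⟩
        · rw [PAG.mk_left_toAdd]
          exact_mod_cast Padic.norm_int_le_one (j.val : ℤ)
        · rw [PAG.mk_right]; exact hgrn
    rw [himg, Nat.card_range_of_injective hinj, Nat.card_zmod]
  · -- right cosets: only one
    have himg : (Quotient.mk (QuotientGroup.rightRel (padicAffineGamma p)) ''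
        {x : PadicAffineGroup p | ∃ a ∈ padicAffineGamma p, ∃ b ∈ padicAffineGamma p,
          x = a * g * b}) = {Quotient.mk (QuotientGroup.rightRel (padicAffineGamma p)) g} := by
      ext q
      constructor
      · rintro ⟨x, hx, rfl⟩
        obtain ⟨h1, h2⟩ := (hD x).mp hx
        rw [Set.mem_singleton_iff]
        refine Quotient.sound (QuotientGroup.rightRel_apply.mpr (PAG.mem_gamma.mpr ⟨?_, ?_⟩))
        · simp only [PAG.inv_eq, PAG.mul_eq, PAG.mk_left_toAdd, PAG.mk_right, toAdd_ofAdd, hgl, zero_add]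
          rw [norm_mul, norm_mul, norm_neg, hgrn, Units.val_inv_eq_inv_val, norm_inv, h2,
            inv_inv]
          calc (p:ℝ)⁻¹ * ((p:ℝ) * ‖x.left.toAdd‖) = ‖x.left.toAdd‖ := by
                field_simp
            _ ≤ 1 := h1
        · simp only [PAG.inv_eq, PAG.mul_eq, PAG.mk_right]
          rw [Units.val_mul, norm_mul, hgrn, Units.val_inv_eq_inv_val, norm_inv, h2, inv_inv,
            inv_mul_cancel₀ hp0.ne']
      · rw [Set.mem_singleton_iff]
        rintro rfl
        exact ⟨g, (hD g).mpr ⟨by rw [hgl]; simp, hgrn⟩, rfl⟩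
    rw [himg]
    simp
end
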